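/- Let d ≥ 1 and let C be a traceless Hermitian d×d complex matrix. Then for every d×d density matrix ρ, one has Tr[ρ²] − Tr[ρC] ≥ 1/d − Tr[C²]/4. Moreover, if the smallest eigenvalue of C satisfies λ_min(C) ≥ −2/d, then the infimum over all d×d density matrices ρ of Tr[ρ²] − Tr[ρC] equals exactly 1/d − Tr[C²]/4 (attained at ρ = I/d + C/2). -/

import Mathlib

open Matrix ComplexOrder

private lemma herm_trace_sq_nonneg {d : ℕ} (σ : Matrix (Fin d) (Fin d) ℂ)
    (hσ : σ.IsHermitian) : 0 ≤ ((σ * σ).trace).re := by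
  have h2 : σ * σ = σ * σᴴ := by rw [hσ.eq]
  have h : ((σ * σ).trace) = ∑ i, ∑ j, (Complex.normSq (σ i j) : ℂ) := by
    rw [h2]
    simp only [Matrix.trace, Matrix.diag, Matrix.mul_apply, conjTranspose_apply,
      RCLike.star_def, Complex.mul_conj]
  have h3 : ((σ * σ).trace).re = ∑ i, ∑ j, Complex.normSq (σ i j) := by
    rw [h]; norm_cast
  rw [h3]
  exact Finset.sum_nonneg fun i _ => Finset.sum_nonneg fun j _ => Complex.normSq_nonneg _

private lemma key_identity {d : ℕ} (hd : 1 ≤ d) (C ρ : Matrix (Fin d) (Fin d) ℂ)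
    (hC0 : C.trace = 0) (hρ1 : ρ.trace = 1) :
    (ρ*ρ).trace - (ρ*C).trace =
      ((ρ - ((d:ℂ)⁻¹ • 1 + (2:ℂ)⁻¹ • C)) * (ρ - ((d:ℂ)⁻¹ • 1 + (2:ℂ)⁻¹ • C))).trace
        + (d:ℂ)⁻¹ - (C*C).trace/4 := by
  have hd' : (d:ℂ) ≠ 0 := Nat.cast_ne_zero.mpr (by omega)
  simp only [sub_mul, mul_sub, add_mul, mul_add, smul_mul_assoc, mul_smul_comm,
    trace_sub, trace_add, trace_smul, trace_one, Fintype.card_fin, smul_eq_mul, mul_one, one_mul,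
    trace_mul_comm C ρ, hC0, hρ1, smul_smul]
  field_simp
  ring

private lemma real_key {d : ℕ} (hd : 1 ≤ d) (C ρ : Matrix (Fin d) (Fin d) ℂ)
    (hC0 : C.trace = 0) (hρ1 : ρ.trace = 1) :
    ((ρ*ρ).trace).re - ((ρ*C).trace).re =
      (((ρ - ((d:ℂ)⁻¹ • 1 + (2:ℂ)⁻¹ • C)) * (ρ - ((d:ℂ)⁻¹ • 1 + (2:ℂ)⁻¹ • C))).trace).re
        + 1/(d:ℝ) - ((C*C).trace).re/4 := by
  have h := congrArg Complex.re (key_identity hd C ρ hC0 hρ1)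
  have e1 : ((d:ℂ)⁻¹).re = 1/(d:ℝ) := by
    rw [show ((d:ℂ))⁻¹ = (((d:ℝ)⁻¹ : ℝ) : ℂ) by push_cast; ring, Complex.ofReal_re, one_div]
  simpa [Complex.sub_re, Complex.add_re, Complex.div_ofNat_re, e1] using h

private lemma M_hermitian {d : ℕ} (C : Matrix (Fin d) (Fin d) ℂ) (hC : C.IsHermitian) :
    (((d : ℂ))⁻¹ • (1 : Matrix (Fin d) (Fin d) ℂ) + (2 : ℂ)⁻¹ • C).IsHermitian := by
  unfold Matrix.IsHermitian
  simp [conjTranspose_add, conjTranspose_smul, hC.eq, star_inv₀]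

private lemma M_trace {d : ℕ} (hd : 1 ≤ d) (C : Matrix (Fin d) (Fin d) ℂ)
    (hC0 : C.trace = 0) :
    (((d : ℂ))⁻¹ • (1 : Matrix (Fin d) (Fin d) ℂ) + (2 : ℂ)⁻¹ • C).trace = 1 := by
  have hd' : (d:ℂ) ≠ 0 := Nat.cast_ne_zero.mpr (by omega)
  simp [trace_add, trace_smul, trace_one, hC0, smul_eq_mul, inv_mul_cancel₀ hd']

private lemma M_posSemidef {d : ℕ} (hd : 1 ≤ d) (C : Matrix (Fin d) (Fin d) ℂ)
    (hC : C.IsHermitian) (h : ∀ i, -2 / (d : ℝ) ≤ hC.eigenvalues i) :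
    (((d : ℂ))⁻¹ • (1 : Matrix (Fin d) (Fin d) ℂ) + (2 : ℂ)⁻¹ • C).PosSemidef := by
  have hdpos : (0:ℝ) < d := by exact_mod_cast hd
  set U := (hC.eigenvectorUnitary : Matrix (Fin d) (Fin d) ℂ) with hUdef
  have hU : U * star U = 1 := (Matrix.mem_unitaryGroup_iff).mp hC.eigenvectorUnitary.2
  set f : Fin d → ℂ := fun i => (((d:ℝ)⁻¹ + hC.eigenvalues i / 2 : ℝ) : ℂ) with hfdef
  have h1 : diagonal f = (d:ℂ)⁻¹ • (1 : Matrix (Fin d) (Fin d) ℂ)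
      + (2:ℂ)⁻¹ • diagonal (RCLike.ofReal ∘ hC.eigenvalues) := by
    ext i j
    rcases eq_or_ne i j with rfl | hij
    · simp only [diagonal_apply_eq, Matrix.add_apply, Matrix.smul_apply, one_apply_eq, diagonal_apply_eq,
        Function.comp_apply, smul_eq_mul, mul_one, hfdef, RCLike.ofReal_alg]
      push_cast [Complex.real_smul]
      ring
    · simp [diagonal_apply_ne _ hij, one_apply_ne hij]
  have h2 : U * diagonal f * star U
      = (d:ℂ)⁻¹ • (1 : Matrix (Fin d) (Fin d) ℂ) + (2:ℂ)⁻¹ • C := by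
    rw [h1]
    rw [mul_add, add_mul, mul_smul_comm, mul_smul_comm, smul_mul_assoc, smul_mul_assoc,
      mul_one, hU]
    exact congrArg _ (congrArg _ hC.spectral_theorem.symm)
  rw [← h2]
  have hf : ∀ i, 0 ≤ f i := by
    intro i
    rw [hfdef]
    rw [Complex.zero_le_real]
    have e : -2/(d:ℝ) = -2 * (d:ℝ)⁻¹ := by ring
    have hi := h i
    rw [e] at hi
    linarith
  exact (posSemidef_diagonal_iff.mpr hf).mul_mul_conjTranspose_same U

/-- For every traceless Hermitian `C` and every density matrix `ρ`,
`Tr[ρ²] − Tr[ρC] ≥ 1/d − Tr[C²]/4`; moreover, if all eigenvalues of `C` are `≥ −2/d`,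
this value is the minimum over density matrices, attained at `ρ = I/d + C/2`. -/
theorem purity_minus_linear_term_lower_bound
    {d : ℕ} (hd : 1 ≤ d) (C : Matrix (Fin d) (Fin d) ℂ)
    (hC : C.IsHermitian) (hC0 : C.trace = 0) :
    (∀ ρ : Matrix (Fin d) (Fin d) ℂ, ρ.PosSemidef → ρ.trace = 1 →
      1 / (d : ℝ) - ((C * C).trace).re / 4 ≤ ((ρ * ρ).trace).re - ((ρ * C).trace).re) ∧
    ((∀ i, -2 / (d : ℝ) ≤ hC.eigenvalues i) →
      IsLeast {x : ℝ | ∃ ρ : Matrix (Fin d) (Fin d) ℂ, ρ.PosSemidef ∧ ρ.trace = 1 ∧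
          x = ((ρ * ρ).trace).re - ((ρ * C).trace).re}
        (1 / (d : ℝ) - ((C * C).trace).re / 4) ∧
      (((d : ℂ))⁻¹ • (1 : Matrix (Fin d) (Fin d) ℂ) + (2 : ℂ)⁻¹ • C).PosSemidef ∧
      (((d : ℂ))⁻¹ • (1 : Matrix (Fin d) (Fin d) ℂ) + (2 : ℂ)⁻¹ • C).trace = 1 ∧
      (((((d : ℂ))⁻¹ • (1 : Matrix (Fin d) (Fin d) ℂ) + (2 : ℂ)⁻¹ • C) *
          (((d : ℂ))⁻¹ • (1 : Matrix (Fin d) (Fin d) ℂ) + (2 : ℂ)⁻¹ • C)).trace).re -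
        (((((d : ℂ))⁻¹ • (1 : Matrix (Fin d) (Fin d) ℂ) + (2 : ℂ)⁻¹ • C) * C).trace).re =
        1 / (d : ℝ) - ((C * C).trace).re / 4) := by
  have hMtr := M_trace hd C hC0
  have hMherm := M_hermitian C hC
  -- the value at ρ = M
  have hval : (((((d : ℂ))⁻¹ • (1 : Matrix (Fin d) (Fin d) ℂ) + (2 : ℂ)⁻¹ • C) *
          (((d : ℂ))⁻¹ • (1 : Matrix (Fin d) (Fin d) ℂ) + (2 : ℂ)⁻¹ • C)).trace).re -
        (((((d : ℂ))⁻¹ • (1 : Matrix (Fin d) (Fin d) ℂ) + (2 : ℂ)⁻¹ • C) * C).trace).re =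
        1 / (d : ℝ) - ((C * C).trace).re / 4 := by
    have h := real_key hd C _ hC0 hMtr
    simpa using h
  have hlb : ∀ ρ : Matrix (Fin d) (Fin d) ℂ, ρ.PosSemidef → ρ.trace = 1 →
      1 / (d : ℝ) - ((C * C).trace).re / 4 ≤ ((ρ * ρ).trace).re - ((ρ * C).trace).re := by
    intro ρ hρ hρ1
    have h := real_key hd C ρ hC0 hρ1
    have hσ : (ρ - ((d:ℂ)⁻¹ • 1 + (2:ℂ)⁻¹ • C)).IsHermitian := hρ.1.sub hMherm
    have hnn := herm_trace_sq_nonneg _ hσ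
    linarith
  refine ⟨hlb, fun heig => ?_⟩
  have hpsd := M_posSemidef hd C hC heig
  refine ⟨⟨⟨_, hpsd, hMtr, hval.symm⟩, ?_⟩, hpsd, hMtr, hval⟩
  rintro x ⟨ρ, hρ, hρ1, rfl⟩
  exact hlb ρ hρ hρ1
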